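/- Let u be a map from ℝ² (with the Euclidean norm) to ℝ³ (with the Euclidean norm) that is differentiable at every x with ‖x‖ > 1/2 and satisfies ‖fderiv u x‖ ≤ c ‖x‖⁻² log(2 + ‖x‖) there, where c > 0. Let η : ℝ → ℝ be continuously differentiable with 0 ≤ η ≤ 1, η(t) = 1 for t ≤ 2/3 and η(t) = 0 for t ≥ 5/6. For R ≥ 4 define the annulus A_R := {x : 2R/3 ≤ ‖x‖ ≤ 5R/6}, the average a_R := (the Bochner average of u over A_R with respect to Lebesgue measure), and the truncation (Π_R u)(x) := η(‖x‖/R) • (u(x) − a_R). Then there exists C > 0, depending only on c and η, such that for all R ≥ 4: (∫_{‖x‖≥1} ‖fderiv (Π_R u) x − fderiv u x‖² dx)^{1/2} ≤ C R⁻¹ log R. -/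

import Mathlib

set_option maxHeartbeats 1000000

open MeasureTheory

namespace Stmt8Aux

open Metric Set
open scoped RealInnerProductSpace

lemma logR_pos {R : ℝ} (hR : 4 ≤ R) : 0 < Real.log R := Real.log_pos (by linarith)

lemma log2R {R : ℝ} (hR : 4 ≤ R) : Real.log (2 + R) ≤ 2 * Real.log R := by
  calc Real.log (2 + R) ≤ Real.log (R ^ 2) :=
        Real.log_le_log (by linarith) (by nlinarith)
    _ = 2 * Real.log R := by rw [Real.log_pow]; push_cast; ring

lemma one_le_log2R {R : ℝ} (hR : 4 ≤ R) : 1 ≤ Real.log (2 + R) := by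
  rw [Real.le_log_iff_exp_le (by linarith)]
  have := Real.exp_one_lt_d9
  linarith

lemma tail_log {R r : ℝ} (hR : 4 ≤ R) (hr : 5 * R / 6 ≤ r) :
    Real.log (2 + r) ^ 2 ≤ 20 * Real.log R ^ 2 * (r / R) := by
  have hR0 : (0:ℝ) < R := by linarith
  have hr0 : (0:ℝ) < r := by linarith
  set s : ℝ := r / (5 * R / 6) with hs
  have hs1 : 1 ≤ s := (one_le_div (by linarith)).2 hr
  have h1 : Real.log (2 + r) ≤ Real.log (2 + R) + Real.log s := by
    rw [← Real.log_mul (by linarith) (by linarith)]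
    apply Real.log_le_log (by linarith)
    have key : (2 + r) * (5 * R / 6) ≤ (2 + R) * r := by nlinarith
    calc 2 + r ≤ ((2 + R) * r) / (5 * R / 6) := (le_div_iff₀ (by linarith)).2 key
      _ = (2 + R) * (r / (5 * R / 6)) := by ring
  have h2 : Real.log s ≤ 2 * Real.sqrt s - 2 := by
    have h3 : Real.log (Real.sqrt s) ≤ Real.sqrt s - 1 :=
      Real.log_le_sub_one_of_pos (Real.sqrt_pos.2 (by linarith))
    rw [Real.log_sqrt (by linarith)] at h3
    linarith
  have h4 : 1 ≤ Real.log (2 + R) := by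
    rw [Real.le_log_iff_exp_le (by linarith)]
    have := Real.exp_one_lt_d9; linarith
  have hss : 0 ≤ Real.sqrt s := Real.sqrt_nonneg s
  have h5 : Real.log (2 + r) ≤ Real.log (2 + R) * (2 * Real.sqrt s) := by
    have hls : 0 ≤ Real.log s := Real.log_nonneg hs1
    calc Real.log (2 + r) ≤ Real.log (2 + R) + Real.log s := h1
      _ ≤ Real.log (2 + R) * (1 + Real.log s) := by nlinarith
      _ ≤ Real.log (2 + R) * (2 * Real.sqrt s) := by nlinarith
  have h6 : Real.log (2 + r) ^ 2 ≤ Real.log (2 + R) ^ 2 * (4 * s) := by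
    have h0 : 0 ≤ Real.log (2 + r) := Real.log_nonneg (by linarith)
    have := Real.sq_sqrt (show (0:ℝ) ≤ s by linarith)
    nlinarith
  have h7 : Real.log (2 + R) ≤ 2 * Real.log R := by
    calc Real.log (2 + R) ≤ Real.log (R ^ 2) :=
          Real.log_le_log (by linarith) (by nlinarith)
      _ = 2 * Real.log R := by rw [Real.log_pow]; push_cast; ring
  have h8 : Real.log (2 + R) ^ 2 ≤ 4 * Real.log R ^ 2 := by nlinarith
  have h9 : 4 * s ≤ 5 * (r / R) := by
    rw [hs, show (4:ℝ) * (r / (5 * R / 6)) = (24 / 5) * (r / R) by field_simp; ring]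
    have : 0 ≤ r / R := by positivity
    linarith
  nlinarith [sq_nonneg (Real.log (2+R)), mul_nonneg (sq_nonneg (Real.log R)) (show (0:ℝ) ≤ r/R by positivity)]


lemma hop {c : ℝ} (hc : 0 < c) {u : EuclideanSpace ℝ (Fin 2) → EuclideanSpace ℝ (Fin 3)}
    (hu : ∀ x : EuclideanSpace ℝ (Fin 2), 1 / 2 < ‖x‖ → DifferentiableAt ℝ u x ∧
      ‖fderiv ℝ u x‖ ≤ c * (‖x‖ ^ 2)⁻¹ * Real.log (2 + ‖x‖))
    {R : ℝ} (hR : 4 ≤ R) {a b : EuclideanSpace ℝ (Fin 2)}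
    (hab : 0 ≤ ⟪a, b⟫) (ha1 : 2 * R / 3 ≤ ‖a‖) (hb1 : 2 * R / 3 ≤ ‖b‖)
    (ha2 : ‖a‖ ≤ 5 * R / 6) (hb2 : ‖b‖ ≤ 5 * R / 6) :
    ‖u b - u a‖ ≤ 15 / 2 * c * R⁻¹ * Real.log (2 + R) := by
  have hR0 : (0:ℝ) < R := by linarith
  have hseg : ∀ z ∈ segment ℝ a b, 2 * R ^ 2 / 9 ≤ ‖z‖ ^ 2 ∧ ‖z‖ ≤ 5 * R / 6 := by
    rintro z ⟨p, q, hp, hq, hpq, rfl⟩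
    have ha0 := norm_nonneg a
    have hb0 := norm_nonneg b
    constructor
    · have hn : ‖p • a + q • b‖ ^ 2
          = p ^ 2 * ‖a‖ ^ 2 + 2 * (p * q * ⟪a, b⟫) + q ^ 2 * ‖b‖ ^ 2 := by
        rw [norm_add_sq_real, real_inner_smul_left, real_inner_smul_right,
          norm_smul, norm_smul]
        simp only [Real.norm_eq_abs, abs_of_nonneg hp, abs_of_nonneg hq, mul_pow]
        ring
      rw [hn]
      have h1 : p ^ 2 * (2 * R / 3) ^ 2 ≤ p ^ 2 * ‖a‖ ^ 2 := by
        apply mul_le_mul_of_nonneg_left _ (sq_nonneg p); nlinarith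
      have h2 : q ^ 2 * (2 * R / 3) ^ 2 ≤ q ^ 2 * ‖b‖ ^ 2 := by
        apply mul_le_mul_of_nonneg_left _ (sq_nonneg q); nlinarith
      have hpq2 : 1 / 2 ≤ p ^ 2 + q ^ 2 := by nlinarith [sq_nonneg (p - q)]
      have h3 := mul_le_mul_of_nonneg_right hpq2 (show (0:ℝ) ≤ (2 * R / 3) ^ 2 by positivity)
      nlinarith [mul_nonneg (mul_nonneg hp hq) hab]
    · calc ‖p • a + q • b‖ ≤ ‖p • a‖ + ‖q • b‖ := norm_add_le _ _
        _ = p * ‖a‖ + q * ‖b‖ := by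
            rw [norm_smul, norm_smul]
            simp [Real.norm_eq_abs, abs_of_nonneg hp, abs_of_nonneg hq]
        _ ≤ p * (5 * R / 6) + q * (5 * R / 6) := by gcongr
        _ = 5 * R / 6 := by rw [← add_mul, hpq, one_mul]
  have hhalf : ∀ z ∈ segment ℝ a b, 1 / 2 < ‖z‖ := by
    intro z hz
    obtain ⟨h1, _⟩ := hseg z hz
    nlinarith [norm_nonneg z]
  have hdiff : ∀ z ∈ segment ℝ a b, DifferentiableAt ℝ u z := fun z hz =>
    (hu z (hhalf z hz)).1
  have hlog0 : 0 ≤ Real.log (2 + R) := Real.log_nonneg (by linarith)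
  have hbound : ∀ z ∈ segment ℝ a b,
      ‖fderiv ℝ u z‖ ≤ c * (2 * R ^ 2 / 9)⁻¹ * Real.log (2 + R) := by
    intro z hz
    obtain ⟨h1, h2⟩ := hseg z hz
    refine le_trans (hu z (hhalf z hz)).2 ?_
    have l1 : (‖z‖ ^ 2)⁻¹ ≤ (2 * R ^ 2 / 9)⁻¹ := inv_anti₀ (by positivity) h1
    have l2 : Real.log (2 + ‖z‖) ≤ Real.log (2 + R) :=
      Real.log_le_log (by positivity) (by linarith)
    have l0 : 0 ≤ Real.log (2 + ‖z‖) := Real.log_nonneg (by nlinarith [norm_nonneg z])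
    exact mul_le_mul (mul_le_mul_of_nonneg_left l1 hc.le) l2 l0 (by positivity)
  have key := (convex_segment a b).norm_image_sub_le_of_norm_fderiv_le hdiff hbound
      (left_mem_segment ℝ a b) (right_mem_segment ℝ a b)
  have hba : ‖b - a‖ ≤ 5 * R / 3 := le_trans (norm_sub_le _ _) (by linarith)
  calc ‖u b - u a‖ ≤ (c * (2 * R ^ 2 / 9)⁻¹ * Real.log (2 + R)) * ‖b - a‖ := key
    _ ≤ (c * (2 * R ^ 2 / 9)⁻¹ * Real.log (2 + R)) * (5 * R / 3) := by
        apply mul_le_mul_of_nonneg_left hba (by positivity)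
    _ = 15 / 2 * c * R⁻¹ * Real.log (2 + R) := by field_simp; ring


lemma exists_mid {R : ℝ} (hR : 4 ≤ R) (x y : EuclideanSpace ℝ (Fin 2))
    (hx : 2 * R / 3 ≤ ‖x‖) (hy : 2 * R / 3 ≤ ‖y‖) :
    ∃ p : EuclideanSpace ℝ (Fin 2),
      ‖p‖ = 2 * R / 3 ∧ 0 ≤ ⟪x, p⟫ ∧ 0 ≤ ⟪p, y⟫ := by
  have hR0 : (0:ℝ) < R := by linarith
  have hx0 : x ≠ 0 := by
    intro h; rw [h, norm_zero] at hx; linarith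
  have hxn : 0 < ‖x‖ := norm_pos_iff.2 hx0
  have hyn : 0 < ‖y‖ := by linarith
  by_cases hw : ‖y‖ • x + ‖x‖ • y = 0
  · -- antipodal case: take q ⊥ x
    set q : EuclideanSpace ℝ (Fin 2) :=
      EuclideanSpace.single 1 (x 0) - EuclideanSpace.single 0 (x 1) with hqdef
    have hqx : ⟪q, x⟫ = 0 := by
      rw [hqdef, inner_sub_left, EuclideanSpace.inner_single_left,
        EuclideanSpace.inner_single_left]
      simp [mul_comm]
    have hq2 : ‖q‖ = ‖x‖ := by
      have h1 : ‖q‖ ^ 2 = ‖x‖ ^ 2 := by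
        rw [← real_inner_self_eq_norm_sq, ← real_inner_self_eq_norm_sq]
        rw [hqdef]
        simp only [inner_sub_left, inner_sub_right,
          EuclideanSpace.inner_single_left, EuclideanSpace.inner_single_right,
          EuclideanSpace.single_apply]
        have hx2 : ⟪x, x⟫ = x 0 * x 0 + x 1 * x 1 := by
          simp only [PiLp.inner_apply, RCLike.inner_apply, Fin.sum_univ_two, conj_trivial]
        rw [hx2]; simp
      nlinarith [norm_nonneg q, norm_nonneg x]
    have hq0 : 0 < ‖q‖ := by rw [hq2]; exact hxn
    refine ⟨(2 * R / 3 / ‖q‖) • q, ?_, ?_, ?_⟩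
    · rw [norm_smul, Real.norm_eq_abs, abs_of_nonneg (by positivity)]
      field_simp
    · rw [real_inner_smul_right]
      have hxq : ⟪x, q⟫ = 0 := by rw [real_inner_comm]; exact hqx
      rw [hxq, mul_zero]
    · have hyx : y = -((‖y‖ / ‖x‖) • x) := by
        have hw' : ‖x‖ • y + ‖y‖ • x = 0 := by rw [add_comm]; exact hw
        have h2 : ‖x‖ • y = -(‖y‖ • x) := eq_neg_of_add_eq_zero_left hw'
        calc y = (‖x‖)⁻¹ • (‖x‖ • y) := by rw [smul_smul, inv_mul_cancel₀ hxn.ne', one_smul]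
          _ = -((‖y‖ / ‖x‖) • x) := by rw [h2, smul_neg, smul_smul]; rw [div_eq_inv_mul]
      rw [hyx, real_inner_smul_left, inner_neg_right, real_inner_smul_right, hqx]
      simp
  · set w := ‖y‖ • x + ‖x‖ • y with hwdef
    have hw0 : 0 < ‖w‖ := norm_pos_iff.2 hw
    have hxw : 0 ≤ ⟪x, w⟫ := by
      rw [hwdef, inner_add_right, real_inner_smul_right, real_inner_smul_right,
        real_inner_self_eq_norm_sq]
      nlinarith [abs_real_inner_le_norm x y, neg_abs_le ⟪x, y⟫]
    have hwy : 0 ≤ ⟪w, y⟫ := by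
      rw [hwdef, inner_add_left, real_inner_smul_left, real_inner_smul_left,
        real_inner_self_eq_norm_sq]
      nlinarith [abs_real_inner_le_norm x y, neg_abs_le ⟪x, y⟫]
    refine ⟨(2 * R / 3 / ‖w‖) • w, ?_, ?_, ?_⟩
    · rw [norm_smul, Real.norm_eq_abs, abs_of_nonneg (by positivity)]
      field_simp
    · rw [real_inner_smul_right]
      positivity
    · rw [real_inner_smul_left]
      positivity

section
variable {c : ℝ} {u : EuclideanSpace ℝ (Fin 2) → EuclideanSpace ℝ (Fin 3)} {R : ℝ}

lemma osc (hc : 0 < c)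
    (hu : ∀ x : EuclideanSpace ℝ (Fin 2), 1 / 2 < ‖x‖ → DifferentiableAt ℝ u x ∧
      ‖fderiv ℝ u x‖ ≤ c * (‖x‖ ^ 2)⁻¹ * Real.log (2 + ‖x‖))
    (hR : 4 ≤ R) {x y : EuclideanSpace ℝ (Fin 2)}
    (hx1 : 2 * R / 3 ≤ ‖x‖) (hx2 : ‖x‖ ≤ 5 * R / 6)
    (hy1 : 2 * R / 3 ≤ ‖y‖) (hy2 : ‖y‖ ≤ 5 * R / 6) :
    ‖u x - u y‖ ≤ 15 * c * R⁻¹ * Real.log (2 + R) := by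
  obtain ⟨p, hp, hxp, hpy⟩ := exists_mid hR x y hx1 hy1
  have hp1 : 2 * R / 3 ≤ ‖p‖ := le_of_eq hp.symm
  have hp2 : ‖p‖ ≤ 5 * R / 6 := by rw [hp]; linarith
  have h1 : ‖u x - u p‖ ≤ 15 / 2 * c * R⁻¹ * Real.log (2 + R) :=
    hop hc hu hR (by rw [real_inner_comm]; exact hxp) hp1 hx1 hp2 hx2
  have h2 : ‖u p - u y‖ ≤ 15 / 2 * c * R⁻¹ * Real.log (2 + R) := by
    have := hop hc hu hR (by rw [real_inner_comm]; exact hpy) hy1 hp1 hy2 hp2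
    exact this
  calc ‖u x - u y‖ ≤ ‖u x - u p‖ + ‖u p - u y‖ := norm_sub_le_norm_sub_add_norm_sub _ _ _
    _ ≤ 15 * c * R⁻¹ * Real.log (2 + R) := by linarith

lemma avg_bound (hc : 0 < c)
    (hu : ∀ x : EuclideanSpace ℝ (Fin 2), 1 / 2 < ‖x‖ → DifferentiableAt ℝ u x ∧
      ‖fderiv ℝ u x‖ ≤ c * (‖x‖ ^ 2)⁻¹ * Real.log (2 + ‖x‖))
    (hR : 4 ≤ R) {x : EuclideanSpace ℝ (Fin 2)}
    (hx1 : 2 * R / 3 ≤ ‖x‖) (hx2 : ‖x‖ ≤ 5 * R / 6) :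
    ‖u x - ⨍ z in {z : EuclideanSpace ℝ (Fin 2) |
        2 * R / 3 ≤ ‖z‖ ∧ ‖z‖ ≤ 5 * R / 6}, u z‖ ≤ 15 * c * R⁻¹ * Real.log (2 + R) := by
  have hR0 : (0:ℝ) < R := by linarith
  set A : Set (EuclideanSpace ℝ (Fin 2)) :=
    {z : EuclideanSpace ℝ (Fin 2) | 2 * R / 3 ≤ ‖z‖ ∧ ‖z‖ ≤ 5 * R / 6} with hAdef
  have hAeq : A = closedBall 0 (5 * R / 6) ∩ (ball 0 (2 * R / 3))ᶜ := by
    ext z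
    simp only [hAdef, Set.mem_setOf_eq, Set.mem_inter_iff, mem_closedBall, mem_ball,
      Set.mem_compl_iff, dist_zero_right, not_lt]
    tauto
  have hAfin : volume A < ⊤ :=
    lt_of_le_of_lt (measure_mono (by rw [hAeq]; exact Set.inter_subset_left))
      measure_closedBall_lt_top
  have hApos : 0 < volume A := by
    set x₀ : EuclideanSpace ℝ (Fin 2) := (3 * R / 4) • (EuclideanSpace.single (0 : Fin 2) (1:ℝ))
      with hx₀def
    have hx₀ : ‖x₀‖ = 3 * R / 4 := by
      rw [hx₀def, norm_smul, EuclideanSpace.norm_single, Real.norm_eq_abs, norm_one,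
        abs_of_nonneg (by linarith)]
      ring
    have hsub : closedBall x₀ (R / 24) ⊆ A := by
      intro z hz
      rw [mem_closedBall, dist_eq_norm] at hz
      have habs := abs_norm_sub_norm_le z x₀
      have h1 : |‖z‖ - ‖x₀‖| ≤ R / 24 := le_trans habs hz
      rw [abs_le] at h1
      constructor
      · rw [hx₀] at h1; linarith [h1.1]
      · rw [hx₀] at h1; linarith [h1.2]
    exact lt_of_lt_of_le (measure_closedBall_pos volume x₀ (by linarith)) (measure_mono hsub)
  have hAhalf : ∀ z ∈ A, 1 / 2 < ‖z‖ := by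
    intro z hz; have := hz.1; linarith
  have hccl : IsClosed A := by
    rw [hAeq]; exact IsClosed.inter Metric.isClosed_closedBall isOpen_ball.isClosed_compl
  have hcompact : IsCompact A :=
    IsCompact.of_isClosed_subset (isCompact_closedBall 0 (5 * R / 6)) hccl
      (by rw [hAeq]; exact Set.inter_subset_left)
  have hcont : ContinuousOn u A := fun z hz =>
    ((hu z (hAhalf z hz)).1).continuousAt.continuousWithinAt
  have hint : IntegrableOn u A volume := hcont.integrableOn_compact hcompact
  set m : ℝ := (volume A).toReal with hmdef
  have hm : 0 < m := ENNReal.toReal_pos hApos.ne' hAfin.ne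
  have hsub_int : ∫ z in A, (u x - u z) = m • u x - ∫ z in A, u z := by
    rw [integral_sub (integrableOn_const (C := u x) hAfin.ne) hint, setIntegral_const, measureReal_def]
  have hxa : u x - ⨍ z in A, u z = m⁻¹ • ∫ z in A, (u x - u z) := by
    rw [setAverage_eq, measureReal_def, ← hmdef, hsub_int, smul_sub, smul_smul,
      inv_mul_cancel₀ hm.ne', one_smul]
  have hB : ∀ z ∈ A, ‖u x - u z‖ ≤ 15 * c * R⁻¹ * Real.log (2 + R) := fun z hz =>
    osc hc hu hR hx1 hx2 hz.1 hz.2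
  have hnorm : ‖∫ z in A, (u x - u z)‖ ≤ 15 * c * R⁻¹ * Real.log (2 + R) * m :=
    norm_setIntegral_le_of_norm_le_const hAfin hB
  rw [hxa, norm_smul, Real.norm_eq_abs, abs_of_nonneg (inv_nonneg.2 hm.le)]
  calc m⁻¹ * ‖∫ z in A, (u x - u z)‖ ≤ m⁻¹ * (15 * c * R⁻¹ * Real.log (2 + R) * m) := by
        apply mul_le_mul_of_nonneg_left hnorm (inv_nonneg.2 hm.le)
    _ = 15 * c * R⁻¹ * Real.log (2 + R) := by field_simp

end


lemma cube_integrable :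
    Integrable (Set.indicator {y : EuclideanSpace ℝ (Fin 2) | 1 < ‖y‖}
      (fun y => (‖y‖ ^ 3)⁻¹)) := by
  have hint : Integrable (fun x : EuclideanSpace ℝ (Fin 2) => 8 * (1 + ‖x‖) ^ (-(3:ℝ))) := by
    refine Integrable.const_mul ?_ 8
    apply integrable_one_add_norm (E := EuclideanSpace ℝ (Fin 2))
    rw [finrank_euclideanSpace]
    norm_num
  refine hint.mono' ?_ ?_
  · apply Measurable.aestronglyMeasurable
    exact Measurable.indicator ((measurable_norm.pow_const 3).inv)
      (measurableSet_lt measurable_const measurable_norm)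
  · refine Filter.Eventually.of_forall fun x => ?_
    by_cases hx : x ∈ {y : EuclideanSpace ℝ (Fin 2) | 1 < ‖y‖}
    · rw [Set.indicator_of_mem hx]
      have h1 : (1:ℝ) < ‖x‖ := hx
      have h3 : ((1 + ‖x‖ : ℝ)) ^ (-(3:ℝ)) = (((1 + ‖x‖)) ^ (3:ℕ))⁻¹ := by
        rw [← Real.rpow_natCast (1 + ‖x‖) 3, ← Real.rpow_neg (by positivity)]
        norm_num
      rw [Real.norm_eq_abs, abs_of_nonneg (by positivity), h3,
        show (8:ℝ) * (((1 + ‖x‖)) ^ (3:ℕ))⁻¹ = (((1 + ‖x‖) ^ (3:ℕ)) / 8)⁻¹ by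
          rw [inv_div]; ring]
      refine inv_anti₀ (by positivity) ?_
      have h4 : (1 + ‖x‖) ^ 3 ≤ (2 * ‖x‖) ^ 3 :=
        pow_le_pow_left₀ (by positivity) (by linarith) 3
      nlinarith [h4]
    · rw [Set.indicator_of_notMem hx]
      simp only [norm_zero]
      positivity

lemma tail_integral {a : ℝ} (ha : 0 < a) :
    ∫ x : EuclideanSpace ℝ (Fin 2),
        Set.indicator {y : EuclideanSpace ℝ (Fin 2) | a < ‖y‖} (fun y => (‖y‖ ^ 3)⁻¹) x
      = a⁻¹ * ∫ x : EuclideanSpace ℝ (Fin 2),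
        Set.indicator {y : EuclideanSpace ℝ (Fin 2) | 1 < ‖y‖} (fun y => (‖y‖ ^ 3)⁻¹) x := by
  have key := MeasureTheory.Measure.integral_comp_smul (volume : Measure (EuclideanSpace ℝ (Fin 2)))
    (Set.indicator {y : EuclideanSpace ℝ (Fin 2) | a < ‖y‖} (fun y => (‖y‖ ^ 3)⁻¹)) a
  have hfun : (fun x : EuclideanSpace ℝ (Fin 2) =>
      Set.indicator {y : EuclideanSpace ℝ (Fin 2) | a < ‖y‖} (fun y => (‖y‖ ^ 3)⁻¹) (a • x))
      = fun x : EuclideanSpace ℝ (Fin 2) => (a ^ 3)⁻¹ *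
        Set.indicator {y : EuclideanSpace ℝ (Fin 2) | 1 < ‖y‖} (fun y => (‖y‖ ^ 3)⁻¹) x := by
    funext x
    have hnorm : ‖a • x‖ = a * ‖x‖ := by
      rw [norm_smul, Real.norm_eq_abs, abs_of_nonneg ha.le]
    by_cases hx : x ∈ {y : EuclideanSpace ℝ (Fin 2) | 1 < ‖y‖}
    · have h1 : (1:ℝ) < ‖x‖ := hx
      have hmem : a • x ∈ {y : EuclideanSpace ℝ (Fin 2) | a < ‖y‖} := by
        simp only [Set.mem_setOf_eq, hnorm]
        nlinarith
      rw [Set.indicator_of_mem hmem, Set.indicator_of_mem hx, hnorm, mul_pow, mul_inv]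
    · have h1 : ¬ ((1:ℝ) < ‖x‖) := hx
      have hnot : a • x ∉ {y : EuclideanSpace ℝ (Fin 2) | a < ‖y‖} := by
        simp only [Set.mem_setOf_eq, hnorm, not_lt] at h1 ⊢
        nlinarith
      rw [Set.indicator_of_notMem hnot, Set.indicator_of_notMem hx, mul_zero]
  rw [hfun, integral_const_mul, finrank_euclideanSpace] at key
  simp only [Fintype.card_fin] at key
  rw [abs_of_nonneg (show (0:ℝ) ≤ ((a:ℝ) ^ 2)⁻¹ by positivity), smul_eq_mul] at key
  set T := ∫ x : EuclideanSpace ℝ (Fin 2),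
    Set.indicator {y : EuclideanSpace ℝ (Fin 2) | a < ‖y‖} (fun y => (‖y‖ ^ 3)⁻¹) x with hT
  set I := ∫ x : EuclideanSpace ℝ (Fin 2),
    Set.indicator {y : EuclideanSpace ℝ (Fin 2) | 1 < ‖y‖} (fun y => (‖y‖ ^ 3)⁻¹) x with hI
  have ha' : a ≠ 0 := ha.ne'
  calc T = a ^ 2 * ((a ^ 2)⁻¹ * T) := by field_simp
    _ = a ^ 2 * ((a ^ 3)⁻¹ * I) := by rw [← key]
    _ = a⁻¹ * I := by field_simp

lemma pointwise_bound {c M : ℝ} (hc : 0 < c) (hM1 : 1 ≤ M) {η : ℝ → ℝ}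
    (hη : ContDiff ℝ 1 η) (hη0 : ∀ t, 0 ≤ η t) (hη1 : ∀ t, η t ≤ 1)
    (hηlo : ∀ t : ℝ, t ≤ 2 / 3 → η t = 1) (hηhi : ∀ t : ℝ, 5 / 6 ≤ t → η t = 0)
    (hMb : ∀ t ∈ Set.Icc (0:ℝ) 1, |deriv η t| ≤ M)
    {u : EuclideanSpace ℝ (Fin 2) → EuclideanSpace ℝ (Fin 3)}
    (hu : ∀ x : EuclideanSpace ℝ (Fin 2), 1 / 2 < ‖x‖ → DifferentiableAt ℝ u x ∧
      ‖fderiv ℝ u x‖ ≤ c * (‖x‖ ^ 2)⁻¹ * Real.log (2 + ‖x‖))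
    {R : ℝ} (hR : 4 ≤ R) {a : EuclideanSpace ℝ (Fin 3)}
    (havg : ∀ x : EuclideanSpace ℝ (Fin 2), 2 * R / 3 ≤ ‖x‖ → ‖x‖ ≤ 5 * R / 6 →
      ‖u x - a‖ ≤ 30 * c * R⁻¹ * Real.log R)
    {x : EuclideanSpace ℝ (Fin 2)} (hx : 1 ≤ ‖x‖) :
    ‖fderiv ℝ (fun y : EuclideanSpace ℝ (Fin 2) => η (‖y‖ / R) • (u y - a)) x
        - fderiv ℝ u x‖ ^ 2 ≤
      Set.indicator {y : EuclideanSpace ℝ (Fin 2) | ‖y‖ ≤ 5 * R / 6}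
          (fun _ => (35 * c * M * (R ^ 2)⁻¹ * Real.log R) ^ 2) x
      + (20 * c ^ 2 * Real.log R ^ 2 * R⁻¹) *
        Set.indicator {y : EuclideanSpace ℝ (Fin 2) | 5 * R / 6 < ‖y‖}
          (fun y => (‖y‖ ^ 3)⁻¹) x := by
  have hR0 : (0:ℝ) < R := by linarith
  have hlogR : 0 < Real.log R := Real.log_pos (by linarith)
  rcases lt_or_ge ‖x‖ (2 * R / 3) with h1 | h1
  · -- inner region: derivative difference vanishes
    have hev : (fun y : EuclideanSpace ℝ (Fin 2) => η (‖y‖ / R) • (u y - a))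
        =ᶠ[nhds x] (fun y => u y - a) := by
      have hopen : IsOpen {y : EuclideanSpace ℝ (Fin 2) | ‖y‖ < 2 * R / 3} :=
        isOpen_lt continuous_norm continuous_const
      filter_upwards [hopen.mem_nhds h1] with y hy
      have hy' : ‖y‖ < 2 * R / 3 := hy
      have : η (‖y‖ / R) = 1 := hηlo _ (by rw [div_le_div_iff₀ hR0 (by norm_num)]; linarith)
      rw [this, one_smul]
    have heq : fderiv ℝ (fun y : EuclideanSpace ℝ (Fin 2) => η (‖y‖ / R) • (u y - a)) x
        = fderiv ℝ u x := by rw [hev.fderiv_eq, fderiv_sub_const]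
    rw [heq, sub_self, norm_zero]
    rw [Set.indicator_of_mem (show x ∈ {y : EuclideanSpace ℝ (Fin 2) | ‖y‖ ≤ 5 * R / 6} by
        simp only [Set.mem_setOf_eq]; linarith),
      Set.indicator_of_notMem (show x ∉ {y : EuclideanSpace ℝ (Fin 2) | 5 * R / 6 < ‖y‖} by
        simp only [Set.mem_setOf_eq, not_lt]; linarith), mul_zero, add_zero]
    simpa using sq_nonneg (35 * c * M * (R ^ 2)⁻¹ * Real.log R)
  rcases le_or_gt ‖x‖ (5 * R / 6) with h2 | h2
  · -- annulus region
    have hxhalf : 1 / 2 < ‖x‖ := by linarith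
    have hx0 : x ≠ 0 := by
      intro h; rw [h, norm_zero] at hxhalf; linarith
    have hNdiff : DifferentiableAt ℝ (fun y : EuclideanSpace ℝ (Fin 2) => ‖y‖) x :=
      differentiableAt_id.norm ℝ hx0
    set ν := fderiv ℝ (fun y : EuclideanSpace ℝ (Fin 2) => ‖y‖) x with hν
    have hν1 : ‖ν‖ = 1 := norm_fderiv_norm hNdiff
    have hsc : HasFDerivAt (fun y : EuclideanSpace ℝ (Fin 2) => ‖y‖ / R) (R⁻¹ • ν) x := by
      simpa [div_eq_inv_mul, smul_eq_mul, Pi.smul_def] using hNdiff.hasFDerivAt.const_smul R⁻¹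
    have hηd : HasDerivAt η (deriv η (‖x‖ / R)) (‖x‖ / R) :=
      ((hη.differentiable one_ne_zero) _).hasDerivAt
    have hφ : HasFDerivAt (fun y : EuclideanSpace ℝ (Fin 2) => η (‖y‖ / R))
        (deriv η (‖x‖ / R) • (R⁻¹ • ν)) x := hηd.comp_hasFDerivAt x hsc
    have hud : DifferentiableAt ℝ u x := (hu x hxhalf).1
    have hgd : fderiv ℝ (fun y : EuclideanSpace ℝ (Fin 2) => η (‖y‖ / R) • (u y - a)) x
        = η (‖x‖ / R) • fderiv ℝ u x
          + (ContinuousLinearMap.smulRight (deriv η (‖x‖ / R) • (R⁻¹ • ν)) (u x - a)) := by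
      rw [fderiv_fun_smul hφ.differentiableAt (hud.sub_const a), hφ.fderiv, fderiv_sub_const]
    have hdiff_eq : fderiv ℝ (fun y : EuclideanSpace ℝ (Fin 2) => η (‖y‖ / R) • (u y - a)) x
        - fderiv ℝ u x
        = (η (‖x‖ / R) - 1) • fderiv ℝ u x
          + (ContinuousLinearMap.smulRight (deriv η (‖x‖ / R) • (R⁻¹ • ν)) (u x - a)) := by
      rw [hgd, sub_smul (η (‖x‖ / R)) 1 (fderiv ℝ u x), one_smul]
      abel
    have hb1 : ‖(η (‖x‖ / R) - 1) • fderiv ℝ u x‖ ≤ 5 * c * (R ^ 2)⁻¹ * Real.log R := by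
      rw [norm_smul (η (‖x‖ / R) - 1) (fderiv ℝ u x), Real.norm_eq_abs]
      have hab : |η (‖x‖ / R) - 1| ≤ 1 :=
        abs_le.2 ⟨by linarith [hη0 (‖x‖ / R)], by linarith [hη1 (‖x‖ / R)]⟩
      have l1 : (‖x‖ ^ 2)⁻¹ ≤ ((2 * R / 3) ^ 2)⁻¹ :=
        inv_anti₀ (by positivity) (by nlinarith)
      have l2 : Real.log (2 + ‖x‖) ≤ 2 * Real.log R :=
        le_trans (Real.log_le_log (by positivity) (by linarith)) (log2R hR)
      have l2' : 0 ≤ Real.log (2 + ‖x‖) := Real.log_nonneg (by nlinarith [norm_nonneg x])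
      have hDu2 : ‖fderiv ℝ u x‖ ≤ c * ((2 * R / 3) ^ 2)⁻¹ * (2 * Real.log R) :=
        le_trans (hu x hxhalf).2
          (mul_le_mul (mul_le_mul_of_nonneg_left l1 hc.le) l2 l2' (by positivity))
      calc |η (‖x‖ / R) - 1| * ‖fderiv ℝ u x‖
          ≤ 1 * (c * ((2 * R / 3) ^ 2)⁻¹ * (2 * Real.log R)) :=
            mul_le_mul hab hDu2 (norm_nonneg _) one_pos.le
        _ = (9 / 2) * (c * (R ^ 2)⁻¹ * Real.log R) := by
            rw [one_mul]; field_simp; ring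
        _ ≤ 5 * c * (R ^ 2)⁻¹ * Real.log R := by
            nlinarith [mul_pos (mul_pos hc (inv_pos.2 (show (0:ℝ) < R ^ 2 by positivity))) hlogR]
    have hb2 : ‖ContinuousLinearMap.smulRight (deriv η (‖x‖ / R) • (R⁻¹ • ν)) (u x - a)‖
        ≤ 30 * c * M * (R ^ 2)⁻¹ * Real.log R := by
      rw [ContinuousLinearMap.norm_smulRight_apply]
      have hDφ : ‖deriv η (‖x‖ / R) • (R⁻¹ • ν)‖ ≤ M * R⁻¹ := by
        rw [norm_smul, norm_smul, hν1, Real.norm_eq_abs, Real.norm_eq_abs, mul_one,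
          abs_of_nonneg (inv_nonneg.2 hR0.le)]
        refine mul_le_mul_of_nonneg_right ?_ (inv_nonneg.2 hR0.le)
        refine hMb _ ⟨by positivity, ?_⟩
        rw [div_le_one hR0]; linarith
      calc ‖deriv η (‖x‖ / R) • (R⁻¹ • ν)‖ * ‖u x - a‖
          ≤ (M * R⁻¹) * (30 * c * R⁻¹ * Real.log R) :=
            mul_le_mul hDφ (havg x h1 h2) (norm_nonneg _) (by positivity)
        _ = 30 * c * M * (R ^ 2)⁻¹ * Real.log R := by field_simp
    have htot : ‖fderiv ℝ (fun y : EuclideanSpace ℝ (Fin 2) => η (‖y‖ / R) • (u y - a)) x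
        - fderiv ℝ u x‖ ≤ 35 * c * M * (R ^ 2)⁻¹ * Real.log R := by
      rw [hdiff_eq]
      refine le_trans (norm_add_le _ _) ?_
      have hX : 0 ≤ c * (R ^ 2)⁻¹ * Real.log R :=
        mul_nonneg (mul_nonneg hc.le (by positivity)) hlogR.le
      nlinarith [hb1, hb2, hX, hM1]
    rw [Set.indicator_of_mem (show x ∈ {y : EuclideanSpace ℝ (Fin 2) | ‖y‖ ≤ 5 * R / 6}
        from h2),
      Set.indicator_of_notMem (show x ∉ {y : EuclideanSpace ℝ (Fin 2) | 5 * R / 6 < ‖y‖} by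
        simp only [Set.mem_setOf_eq, not_lt]; exact h2), mul_zero, add_zero]
    exact pow_le_pow_left₀ (norm_nonneg _) htot 2
  · -- outer region
    have hev : (fun y : EuclideanSpace ℝ (Fin 2) => η (‖y‖ / R) • (u y - a))
        =ᶠ[nhds x] (fun _ => (0 : EuclideanSpace ℝ (Fin 3))) := by
      have hopen : IsOpen {y : EuclideanSpace ℝ (Fin 2) | 5 * R / 6 < ‖y‖} :=
        isOpen_lt continuous_const continuous_norm
      filter_upwards [hopen.mem_nhds h2] with y hy
      have hy' : 5 * R / 6 < ‖y‖ := hy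
      have : η (‖y‖ / R) = 0 := hηhi _ (by rw [div_le_div_iff₀ (by norm_num) hR0]; linarith)
      rw [this, zero_smul]
    have hzero : fderiv ℝ (fun y : EuclideanSpace ℝ (Fin 2) => η (‖y‖ / R) • (u y - a)) x
        = 0 := by rw [hev.fderiv_eq]; exact fderiv_const_apply 0
    rw [hzero, zero_sub, norm_neg]
    rw [Set.indicator_of_notMem (show x ∉ {y : EuclideanSpace ℝ (Fin 2) | ‖y‖ ≤ 5 * R / 6} by
        simp only [Set.mem_setOf_eq, not_le]; exact h2),
      Set.indicator_of_mem (show x ∈ {y : EuclideanSpace ℝ (Fin 2) | 5 * R / 6 < ‖y‖}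
        from h2), zero_add]
    have hxhalf : 1 / 2 < ‖x‖ := by linarith
    have hr0 : (0:ℝ) < ‖x‖ := by linarith
    have hsq : ‖fderiv ℝ u x‖ ^ 2 ≤ (c * (‖x‖ ^ 2)⁻¹ * Real.log (2 + ‖x‖)) ^ 2 :=
      pow_le_pow_left₀ (norm_nonneg _) (hu x hxhalf).2 2
    refine le_trans hsq ?_
    have hlog := tail_log hR h2.le
    calc (c * (‖x‖ ^ 2)⁻¹ * Real.log (2 + ‖x‖)) ^ 2
        = c ^ 2 * ((‖x‖ ^ 2)⁻¹) ^ 2 * Real.log (2 + ‖x‖) ^ 2 := by ring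
      _ ≤ c ^ 2 * ((‖x‖ ^ 2)⁻¹) ^ 2 * (20 * Real.log R ^ 2 * (‖x‖ / R)) := by
          apply mul_le_mul_of_nonneg_left hlog (by positivity)
      _ = 20 * c ^ 2 * Real.log R ^ 2 * R⁻¹ * (‖x‖ ^ 3)⁻¹ := by
          field_simp

lemma cube_integrable' {b : ℝ} (hb : 1 ≤ b) :
    Integrable (Set.indicator {y : EuclideanSpace ℝ (Fin 2) | b < ‖y‖}
      (fun y => (‖y‖ ^ 3)⁻¹)) := by
  refine cube_integrable.mono' ?_ ?_
  · exact (Measurable.indicator ((measurable_norm.pow_const 3).inv)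
      (measurableSet_lt measurable_const measurable_norm)).aestronglyMeasurable
  · refine Filter.Eventually.of_forall fun x => ?_
    by_cases hx : x ∈ {y : EuclideanSpace ℝ (Fin 2) | b < ‖y‖}
    · have h1 : b < ‖x‖ := hx
      rw [Set.indicator_of_mem hx,
        Set.indicator_of_mem (show x ∈ {y : EuclideanSpace ℝ (Fin 2) | 1 < ‖y‖} by
          simp only [Set.mem_setOf_eq]; linarith),
        Real.norm_eq_abs, abs_of_nonneg (by positivity)]
    · rw [Set.indicator_of_notMem hx, norm_zero]
      apply Set.indicator_nonneg
      intro y _; positivity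


end Stmt8Aux

open Stmt8Aux Metric Set
open scoped RealInnerProductSpace

/-- Continuum form of the truncation-operator estimate (2.3): for a core
corrector with the generic decay (2.2), the truncation Π_R changes the energy
norm only by O(R⁻¹ log R). -/
theorem stmt_8 (c : ℝ) (hc : 0 < c) (η : ℝ → ℝ)
    (hη : ContDiff ℝ 1 η) (hη0 : ∀ t, 0 ≤ η t) (hη1 : ∀ t, η t ≤ 1)
    (hηlo : ∀ t : ℝ, t ≤ 2 / 3 → η t = 1) (hηhi : ∀ t : ℝ, 5 / 6 ≤ t → η t = 0) :
    ∃ C : ℝ, 0 < C ∧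
      ∀ u : EuclideanSpace ℝ (Fin 2) → EuclideanSpace ℝ (Fin 3),
        (∀ x : EuclideanSpace ℝ (Fin 2), 1 / 2 < ‖x‖ →
          DifferentiableAt ℝ u x ∧
          ‖fderiv ℝ u x‖ ≤ c * (‖x‖ ^ 2)⁻¹ * Real.log (2 + ‖x‖)) →
        ∀ R : ℝ, 4 ≤ R →
          Real.sqrt (∫ x in {x : EuclideanSpace ℝ (Fin 2) | 1 ≤ ‖x‖},
              ‖fderiv ℝ (fun y : EuclideanSpace ℝ (Fin 2) =>
                  η (‖y‖ / R) • (u y -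
                    ⨍ z in {z : EuclideanSpace ℝ (Fin 2) |
                        2 * R / 3 ≤ ‖z‖ ∧ ‖z‖ ≤ 5 * R / 6}, u z)) x
                - fderiv ℝ u x‖ ^ 2)
            ≤ C * R⁻¹ * Real.log R := by
  classical
  obtain ⟨M0, hM0⟩ := (isCompact_Icc : IsCompact (Set.Icc (0:ℝ) 1)).exists_bound_of_continuousOn
    (hη.continuous_deriv le_rfl).continuousOn
  set M : ℝ := max M0 1 with hM
  have hM1 : (1:ℝ) ≤ M := le_max_right _ _
  have hMb : ∀ t ∈ Set.Icc (0:ℝ) 1, |deriv η t| ≤ M := fun t ht =>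
    le_trans (by simpa using hM0 t ht) (le_max_left _ _)
  set V0 : ℝ := (volume (ball (0:EuclideanSpace ℝ (Fin 2)) 1)).toReal with hV0
  have hV0' : (0:ℝ) ≤ V0 := ENNReal.toReal_nonneg
  set I0 : ℝ := ∫ x : EuclideanSpace ℝ (Fin 2),
    Set.indicator {y : EuclideanSpace ℝ (Fin 2) | 1 < ‖y‖} (fun y => (‖y‖ ^ 3)⁻¹) x with hI0
  have hI0' : (0:ℝ) ≤ I0 := by
    rw [hI0]
    apply integral_nonneg
    intro x
    apply Set.indicator_nonneg
    intro y _; positivity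
  set D : ℝ := (35 * c * M) ^ 2 * V0 + 24 * c ^ 2 * I0 with hD
  have hD0 : (0:ℝ) ≤ D := by
    rw [hD]; positivity
  refine ⟨Real.sqrt D + 1, by positivity, ?_⟩
  intro u hu R hR
  have hR0 : (0:ℝ) < R := by linarith
  have hlogR : 0 < Real.log R := logR_pos hR
  set a := ⨍ z in {z : EuclideanSpace ℝ (Fin 2) |
      2 * R / 3 ≤ ‖z‖ ∧ ‖z‖ ≤ 5 * R / 6}, u z with ha
  have havg : ∀ x : EuclideanSpace ℝ (Fin 2), 2 * R / 3 ≤ ‖x‖ → ‖x‖ ≤ 5 * R / 6 →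
      ‖u x - a‖ ≤ 30 * c * R⁻¹ * Real.log R := by
    intro x hx1 hx2
    have h := avg_bound hc hu hR hx1 hx2
    rw [← ha] at h
    refine le_trans h ?_
    have h2 := log2R hR
    have hcR : (0:ℝ) ≤ 15 * c * R⁻¹ := by positivity
    calc 15 * c * R⁻¹ * Real.log (2 + R) ≤ 15 * c * R⁻¹ * (2 * Real.log R) :=
          mul_le_mul_of_nonneg_left h2 hcR
      _ = 30 * c * R⁻¹ * Real.log R := by ring
  set β : ℝ := 35 * c * M * (R ^ 2)⁻¹ * Real.log R with hβ
  set γ : ℝ := 20 * c ^ 2 * Real.log R ^ 2 * R⁻¹ with hγ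
  have hγ0 : (0:ℝ) ≤ γ := by
    rw [hγ]
    exact mul_nonneg (by positivity) (inv_nonneg.2 hR0.le)
  -- the dominating function
  set G : EuclideanSpace ℝ (Fin 2) → ℝ := fun x =>
    Set.indicator {y : EuclideanSpace ℝ (Fin 2) | ‖y‖ ≤ 5 * R / 6} (fun _ => β ^ 2) x
    + γ * Set.indicator {y : EuclideanSpace ℝ (Fin 2) | 5 * R / 6 < ‖y‖}
        (fun y => (‖y‖ ^ 3)⁻¹) x with hG
  have hmeas1 : MeasurableSet {y : EuclideanSpace ℝ (Fin 2) | ‖y‖ ≤ 5 * R / 6} :=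
    measurableSet_le measurable_norm measurable_const
  have hball : {y : EuclideanSpace ℝ (Fin 2) | ‖y‖ ≤ 5 * R / 6} = closedBall 0 (5 * R / 6) := by
    ext y; simp [mem_closedBall, dist_zero_right]
  have hint1 : Integrable (Set.indicator {y : EuclideanSpace ℝ (Fin 2) | ‖y‖ ≤ 5 * R / 6}
      (fun _ => β ^ 2)) := by
    rw [integrable_indicator_iff hmeas1]
    refine integrableOn_const ?_
    rw [hball]
    exact measure_closedBall_lt_top.ne
  have hint2 : Integrable (Set.indicator {y : EuclideanSpace ℝ (Fin 2) | 5 * R / 6 < ‖y‖}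
      (fun y => (‖y‖ ^ 3)⁻¹)) := cube_integrable' (by linarith)
  have hGint : Integrable G := by
    rw [hG]
    exact hint1.add (hint2.const_mul γ)
  have hGnn : ∀ x, 0 ≤ G x := by
    intro x
    rw [hG]
    refine add_nonneg (Set.indicator_nonneg (fun y _ => sq_nonneg β) x)
      (mul_nonneg hγ0 (Set.indicator_nonneg (fun y _ => by positivity) x))
  have hsetmeas : MeasurableSet {x : EuclideanSpace ℝ (Fin 2) | 1 ≤ ‖x‖} :=
    measurableSet_le measurable_const measurable_norm
  have step1 : ∫ x in {x : EuclideanSpace ℝ (Fin 2) | 1 ≤ ‖x‖},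
      ‖fderiv ℝ (fun y : EuclideanSpace ℝ (Fin 2) => η (‖y‖ / R) • (u y - a)) x
        - fderiv ℝ u x‖ ^ 2
      ≤ ∫ x in {x : EuclideanSpace ℝ (Fin 2) | 1 ≤ ‖x‖}, G x := by
    refine integral_mono_of_nonneg (Filter.Eventually.of_forall fun x => by positivity)
      (hGint.restrict) ?_
    refine (ae_restrict_iff' hsetmeas).2 (Filter.Eventually.of_forall ?_)
    intro x hx
    exact pointwise_bound hc hM1 hη hη0 hη1 hηlo hηhi hMb hu hR havg hx
  have step2 : ∫ x in {x : EuclideanSpace ℝ (Fin 2) | 1 ≤ ‖x‖}, G x ≤ ∫ x, G x :=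
    setIntegral_le_integral hGint (Filter.Eventually.of_forall hGnn)
  have hvol : (volume {y : EuclideanSpace ℝ (Fin 2) | ‖y‖ ≤ 5 * R / 6}).toReal
      = (5 * R / 6) ^ 2 * V0 := by
    rw [hball, Measure.addHaar_closedBall volume 0 (by positivity : (0:ℝ) ≤ 5 * R / 6),
      finrank_euclideanSpace]
    simp only [Fintype.card_fin]
    rw [ENNReal.toReal_mul, ENNReal.toReal_ofReal (by positivity)]
  have step3 : ∫ x, G x = (5 * R / 6) ^ 2 * V0 * β ^ 2 + γ * ((5 * R / 6)⁻¹ * I0) := by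
    rw [hG, integral_add hint1 (hint2.const_mul γ)]
    congr 1
    · rw [integral_indicator hmeas1, setIntegral_const, measureReal_def, hvol, smul_eq_mul]
    · rw [integral_const_mul, tail_integral (by linarith : (0:ℝ) < 5 * R / 6), ← hI0]
  have step4 : (5 * R / 6) ^ 2 * V0 * β ^ 2 + γ * ((5 * R / 6)⁻¹ * I0)
      ≤ D * (R⁻¹ * Real.log R) ^ 2 := by
    rw [hβ, hγ, hD]
    have e1 : (5 * R / 6) ^ 2 * V0 * (35 * c * M * (R ^ 2)⁻¹ * Real.log R) ^ 2
        ≤ (35 * c * M) ^ 2 * V0 * (R⁻¹ * Real.log R) ^ 2 := by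
      have : (5 * R / 6) ^ 2 * V0 * (35 * c * M * (R ^ 2)⁻¹ * Real.log R) ^ 2
          = (25 / 36) * ((35 * c * M) ^ 2 * V0 * (R⁻¹ * Real.log R) ^ 2) := by
        field_simp
        ring
      rw [this]
      nlinarith [mul_nonneg (mul_nonneg (sq_nonneg (35 * c * M)) hV0')
        (sq_nonneg (R⁻¹ * Real.log R))]
    have e2 : 20 * c ^ 2 * Real.log R ^ 2 * R⁻¹ * ((5 * R / 6)⁻¹ * I0)
        = 24 * c ^ 2 * I0 * (R⁻¹ * Real.log R) ^ 2 := by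
      field_simp
      ring
    rw [e2]
    have := mul_nonneg (mul_nonneg (by positivity : (0:ℝ) ≤ 24 * c ^ 2) hI0')
      (sq_nonneg (R⁻¹ * Real.log R))
    nlinarith [e1]
  have htotal : ∫ x in {x : EuclideanSpace ℝ (Fin 2) | 1 ≤ ‖x‖},
      ‖fderiv ℝ (fun y : EuclideanSpace ℝ (Fin 2) => η (‖y‖ / R) • (u y - a)) x
        - fderiv ℝ u x‖ ^ 2 ≤ D * (R⁻¹ * Real.log R) ^ 2 := by
    linarith [step1, step2, step3.le, step4, step3.ge]
  calc Real.sqrt (∫ x in {x : EuclideanSpace ℝ (Fin 2) | 1 ≤ ‖x‖},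
        ‖fderiv ℝ (fun y : EuclideanSpace ℝ (Fin 2) => η (‖y‖ / R) • (u y - a)) x
          - fderiv ℝ u x‖ ^ 2)
      ≤ Real.sqrt (D * (R⁻¹ * Real.log R) ^ 2) := Real.sqrt_le_sqrt htotal
    _ = Real.sqrt D * (R⁻¹ * Real.log R) := by
        rw [Real.sqrt_mul hD0, Real.sqrt_sq (by positivity)]
    _ ≤ (Real.sqrt D + 1) * R⁻¹ * Real.log R := by
        have h1 : (0:ℝ) ≤ R⁻¹ * Real.log R := by positivity
        nlinarith [Real.sqrt_nonneg D]
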